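/- arXiv:1301.5447 — 2 statements merged into one kernel-verified Lean document; each statement's English description precedes it below -/
import Mathlib

section
/- There exist constants C₁ > 0 and δ > 0 such that ∑_{m=0}^∞ |m − s| · s^m / (m+1)! ≤ C₁ √s for all s ∈ (0, δ); and there exist constants C₂ > 0 and S > 0 such that e^{−s} · ∑_{m=0}^∞ |m − s| · s^m / (m+1)! ≤ C₂ / √s for all s ≥ S. -/
lemma hexp (s : ℝ) : ∑' n : ℕ, s ^ n / (n.factorial : ℝ) = Real.exp s := by
  rw [Real.exp_eq_exp_ℝ, NormedSpace.exp_eq_tsum_div]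

lemma sumExp (s : ℝ) : Summable (fun n : ℕ => s ^ n / (n.factorial : ℝ)) :=
  Real.summable_pow_div_factorial s

lemma sum1 (s : ℝ) : Summable (fun n : ℕ => (n : ℝ) * s ^ n / (n.factorial : ℝ)) := by
  rw [← summable_nat_add_iff 1]
  refine ((sumExp s).mul_left s).congr fun n => ?_
  rw [Nat.factorial_succ]
  have h1 : ((n.factorial : ℕ) : ℝ) ≠ 0 := by positivity
  push_cast
  field_simp
  ring

lemma tsum1 (s : ℝ) : ∑' n : ℕ, (n : ℝ) * s ^ n / (n.factorial : ℝ) = s * Real.exp s := by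
  rw [Summable.tsum_eq_zero_add (sum1 s)]
  simp only [Nat.cast_zero, zero_mul, zero_div, zero_add]
  calc ∑' n : ℕ, ((n + 1 : ℕ) : ℝ) * s ^ (n+1) / ((n+1).factorial : ℝ)
      = ∑' n : ℕ, s * (s ^ n / (n.factorial : ℝ)) := by
        refine tsum_congr fun n => ?_
        rw [Nat.factorial_succ]
        have h1 : ((n.factorial : ℕ) : ℝ) ≠ 0 := by positivity
        push_cast
        field_simp
        ring
    _ = s * Real.exp s := by rw [tsum_mul_left, hexp]

lemma sum2 (s : ℝ) : Summable (fun n : ℕ => (n : ℝ) * ((n : ℝ) - 1) * s ^ n / (n.factorial : ℝ)) := by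
  rw [← summable_nat_add_iff 2]
  refine ((sumExp s).mul_left (s^2)).congr fun n => ?_
  rw [show (n+2).factorial = (n+2)*((n+1)*n.factorial) by
    rw [Nat.factorial_succ, Nat.factorial_succ]]
  have h1 : ((n.factorial : ℕ) : ℝ) ≠ 0 := by positivity
  push_cast
  field_simp
  ring

lemma tsum2 (s : ℝ) :
    ∑' n : ℕ, (n : ℝ) * ((n : ℝ) - 1) * s ^ n / (n.factorial : ℝ) = s ^ 2 * Real.exp s := by
  rw [Summable.tsum_eq_zero_add (sum2 s)]
  rw [Summable.tsum_eq_zero_add ((summable_nat_add_iff 1).mpr (sum2 s))]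
  simp only [Nat.cast_zero, Nat.cast_one, Nat.cast_add, zero_mul, zero_div, zero_add,
    one_mul, sub_self, mul_zero, zero_mul]
  calc ∑' n : ℕ, ((n:ℝ)+1+1) * ((n:ℝ)+1+1-1) * s ^ (n+1+1) / ((n+1+1).factorial : ℝ)
      = ∑' n : ℕ, s^2 * (s ^ n / (n.factorial : ℝ)) := by
        refine tsum_congr fun n => ?_
        rw [show (n+1+1).factorial = (n+1+1)*((n+1)*n.factorial) by
          rw [Nat.factorial_succ, Nat.factorial_succ]]
        have h1 : ((n.factorial : ℕ) : ℝ) ≠ 0 := by positivity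
        push_cast
        field_simp
        ring
    _ = s^2 * Real.exp s := by rw [tsum_mul_left, hexp]

lemma decompM (s c : ℝ) (n : ℕ) : ((n:ℝ) - c)^2 * s ^ n / (n.factorial : ℝ)
    = (n : ℝ) * ((n : ℝ) - 1) * s ^ n / (n.factorial : ℝ)
      + (1 - 2*c) * ((n : ℝ) * s ^ n / (n.factorial : ℝ))
      + c^2 * (s ^ n / (n.factorial : ℝ)) := by
  have h1 : ((n.factorial : ℕ) : ℝ) ≠ 0 := by positivity
  field_simp
  ring

lemma sumM (s c : ℝ) : Summable (fun n : ℕ => ((n:ℝ) - c)^2 * s ^ n / (n.factorial : ℝ)) :=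
  (((sum2 s).add ((sum1 s).mul_left (1 - 2*c))).add ((sumExp s).mul_left (c^2))).congr
    fun n => (decompM s c n).symm

lemma tsumM (s c : ℝ) : ∑' n : ℕ, ((n:ℝ) - c)^2 * s ^ n / (n.factorial : ℝ)
    = (s^2 + s - 2*c*s + c^2) * Real.exp s := by
  rw [tsum_congr (decompM s c),
    Summable.tsum_add ((sum2 s).add ((sum1 s).mul_left (1 - 2*c))) ((sumExp s).mul_left (c^2)),
    Summable.tsum_add (sum2 s) ((sum1 s).mul_left (1 - 2*c)), tsum2, tsum_mul_left, tsum1,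
    tsum_mul_left, hexp]
  ring

lemma sumG {s : ℝ} (hs : 0 ≤ s) :
    Summable (fun m : ℕ => |(m : ℝ) - s| * s ^ m / (((m + 1).factorial : ℕ) : ℝ)) := by
  refine Summable.of_nonneg_of_le (fun m => by positivity) (fun m => ?_)
    ((sumExp s).mul_left (1 + s))
  have h1 : |(m:ℝ) - s| ≤ ((m:ℝ) + 1) * (1 + s) := by
    have hm : (0:ℝ) ≤ (m:ℝ) := Nat.cast_nonneg m
    rcases abs_cases ((m:ℝ) - s) with h | h <;> nlinarith
  have h2 : (((m+1).factorial : ℕ) : ℝ) = ((m:ℝ) + 1) * (m.factorial : ℝ) := by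
    rw [Nat.factorial_succ]; push_cast; ring
  have hfac : (0:ℝ) < (((m+1).factorial : ℕ) : ℝ) := by positivity
  calc |(m:ℝ) - s| * s ^ m / (((m+1).factorial : ℕ) : ℝ)
      ≤ (((m:ℝ) + 1) * (1 + s)) * s ^ m / (((m+1).factorial : ℕ) : ℝ) := by gcongr
    _ = (1 + s) * (s ^ m / (m.factorial : ℝ)) := by
        rw [h2]
        have h3 : ((m:ℝ) + 1) ≠ 0 := by positivity
        have h4 : ((m.factorial : ℕ) : ℝ) ≠ 0 := by positivity
        field_simp

lemma keylem {s : ℝ} (hs0 : 0 < s) (hs1 : s < 1) (m : ℕ) :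
    |(m:ℝ) - s| * s ^ m ≤ ((m:ℝ) + 1) * s := by
  cases m with
  | zero =>
    simp only [Nat.cast_zero, pow_zero, mul_one, zero_sub, abs_neg, abs_of_pos hs0]
    linarith
  | succ k =>
    have hk : (0:ℝ) ≤ (k:ℝ) := Nat.cast_nonneg k
    push_cast
    have habs : |(k:ℝ) + 1 - s| ≤ (k:ℝ) + 1 + 1 := by
      rw [abs_of_nonneg (by linarith)]; linarith
    have hpow : s ^ (k+1) ≤ s := by
      have h1 : s ^ k ≤ 1 := pow_le_one₀ hs0.le hs1.le
      calc s ^ (k+1) = s * s ^ k := by ring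
        _ ≤ s * 1 := by nlinarith
        _ = s := mul_one s
    exact mul_le_mul habs hpow (by positivity) (by positivity)

lemma hblem {s : ℝ} (hs0 : 0 < s) (hs1 : s < 1) (m : ℕ) :
    |(m:ℝ) - s| * s ^ m / (((m+1).factorial : ℕ) : ℝ) ≤ s / (m.factorial : ℝ) := by
  have h2 : (((m+1).factorial : ℕ) : ℝ) = ((m:ℝ) + 1) * (m.factorial : ℝ) := by
    rw [Nat.factorial_succ]; push_cast; ring
  have h3 : ((m:ℝ) + 1) ≠ 0 := by positivity
  calc |(m:ℝ) - s| * s ^ m / (((m+1).factorial : ℕ) : ℝ)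
      ≤ (((m:ℝ) + 1) * s) / (((m+1).factorial : ℕ) : ℝ) := by
        have hfac : (0:ℝ) < (((m+1).factorial : ℕ) : ℝ) := by positivity
        exact (div_le_div_iff_of_pos_right hfac).mpr (keylem hs0 hs1 m)
    _ = s / (m.factorial : ℝ) := by rw [h2]; exact mul_div_mul_left s _ h3

set_option maxHeartbeats 1000000 in
/-- `∑_{m=0}^∞ |m − s| s^m/(m+1)! = O(√s)` as `s → 0⁺`, and
`e^{−s} ∑_{m=0}^∞ |m − s| s^m/(m+1)! = O(1/√s)` as `s → ∞`. -/
theorem stmt2 :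
    (∃ C₁ > (0:ℝ), ∃ δ > (0:ℝ), ∀ s ∈ Set.Ioo (0:ℝ) δ,
      (∑' m : ℕ, |(m : ℝ) - s| * s ^ m / ((m + 1).factorial : ℝ)) ≤ C₁ * Real.sqrt s) ∧
    (∃ C₂ > (0:ℝ), ∃ S > (0:ℝ), ∀ s ≥ S,
      Real.exp (-s) * (∑' m : ℕ, |(m : ℝ) - s| * s ^ m / ((m + 1).factorial : ℝ)) ≤
        C₂ / Real.sqrt s) := by
  constructor
  · -- small `s`
    refine ⟨Real.exp 1, Real.exp_pos 1, 1, one_pos, fun s hs => ?_⟩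
    obtain ⟨hs0, hs1⟩ := hs
    have hBsum : Summable (fun m : ℕ => s / (m.factorial : ℝ)) :=
      ((sumExp 1).mul_left s).congr fun n => by rw [one_pow, mul_one_div]
    have h1 := Summable.tsum_le_tsum (hblem hs0 hs1) (sumG hs0.le) hBsum
    have h2 : ∑' m : ℕ, s / (m.factorial : ℝ) = s * Real.exp 1 := by
      calc ∑' m : ℕ, s / (m.factorial : ℝ) = ∑' m : ℕ, s * ((1:ℝ) ^ m / (m.factorial : ℝ)) :=
          tsum_congr fun m => by rw [one_pow, mul_one_div]
        _ = s * Real.exp 1 := by rw [tsum_mul_left, hexp]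
    have hsq : s ≤ Real.sqrt s := by
      nlinarith [Real.sq_sqrt hs0.le, Real.sqrt_nonneg s]
    have hexp1 := Real.exp_pos 1
    calc (∑' m : ℕ, |(m : ℝ) - s| * s ^ m / ((m + 1).factorial : ℝ))
        ≤ s * Real.exp 1 := h1.trans_eq h2
      _ ≤ Real.exp 1 * Real.sqrt s := by nlinarith
  · -- large `s`
    refine ⟨2, two_pos, 1, one_pos, fun s hs1 => ?_⟩
    have hs0 : (0:ℝ) < s := lt_of_lt_of_le one_pos hs1
    set t := Real.sqrt s with htdef
    have ht : 0 < t := Real.sqrt_pos.mpr hs0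
    have ht2 : t ^ 2 = s := Real.sq_sqrt hs0.le
    have hf : Summable (fun n : ℕ => ((n:ℝ) - (s+1))^2 * s ^ n / (n.factorial : ℝ)) :=
      sumM s (s+1)
    have hfs : Summable (fun n : ℕ =>
        (((n+1 : ℕ):ℝ) - (s+1))^2 * s ^ (n+1) / (((n+1).factorial : ℕ) : ℝ)) :=
      (summable_nat_add_iff 1).mpr hf
    have hh : Summable (fun n : ℕ => s ^ (n+1) / (((n+1).factorial : ℕ) : ℝ)) :=
      (summable_nat_add_iff 1).mpr (sumExp s)
    have hHeq : ∀ m : ℕ, (((m:ℝ) - s)^2 + s) * s ^ m / (((m+1).factorial : ℕ) : ℝ)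
        = ((((m+1 : ℕ):ℝ) - (s+1))^2 * s ^ (m+1) / (((m+1).factorial : ℕ) : ℝ)
          + s * (s ^ (m+1) / (((m+1).factorial : ℕ) : ℝ))) / s := by
      intro m
      have h1 : (((m+1).factorial : ℕ) : ℝ) ≠ 0 := by positivity
      have h2 : s ≠ 0 := ne_of_gt hs0
      push_cast
      field_simp
      ring
    have hH : Summable
        (fun m : ℕ => (((m:ℝ) - s)^2 + s) * s ^ m / (((m+1).factorial : ℕ) : ℝ)) :=
      ((hfs.add (hh.mul_left s)).div_const s).congr fun m => (hHeq m).symm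
    have hfsval : ∑' n : ℕ, ((n:ℝ) - (s+1))^2 * s ^ n / (n.factorial : ℝ)
        = (s+1) * Real.exp s := by
      rw [tsumM]; ring_nf
    have hfs_le : ∑' n : ℕ, (((n+1 : ℕ):ℝ) - (s+1))^2 * s ^ (n+1) / (((n+1).factorial : ℕ) : ℝ)
        ≤ (s+1) * Real.exp s := by
      have h0 := Summable.tsum_eq_zero_add hf
      have hf0 : (0:ℝ) ≤ (((0:ℕ):ℝ) - (s+1))^2 * s ^ 0 / ((Nat.factorial 0 : ℕ) : ℝ) := by
        positivity
      rw [hfsval] at h0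
      linarith [h0, hf0]
    have hh_le : ∑' n : ℕ, s ^ (n+1) / (((n+1).factorial : ℕ) : ℝ) ≤ Real.exp s := by
      have h0 := Summable.tsum_eq_zero_add (sumExp s)
      rw [hexp] at h0
      have hf0 : (0:ℝ) ≤ s ^ 0 / ((Nat.factorial 0 : ℕ) : ℝ) := by positivity
      linarith [h0, hf0]
    have hHle : ∑' m : ℕ, (((m:ℝ) - s)^2 + s) * s ^ m / (((m+1).factorial : ℕ) : ℝ)
        ≤ 3 * Real.exp s := by
      rw [tsum_congr hHeq, tsum_div_const, Summable.tsum_add hfs (hh.mul_left s), tsum_mul_left]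
      rw [div_le_iff₀ hs0]
      have he := Real.exp_pos s
      nlinarith [hfs_le, hh_le]
    have hpt : ∀ m : ℕ, |(m:ℝ) - s| * s ^ m / (((m+1).factorial : ℕ) : ℝ)
        ≤ (((m:ℝ) - s)^2 + s) * s ^ m / (((m+1).factorial : ℕ) : ℝ) / (2*t) := by
      intro m
      rw [le_div_iff₀ (by positivity)]
      have habs : 2*t*|(m:ℝ) - s| ≤ ((m:ℝ) - s)^2 + s := by
        nlinarith [sq_nonneg (|(m:ℝ) - s| - t), sq_abs ((m:ℝ) - s), abs_nonneg ((m:ℝ) - s)]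
      have hnn : (0:ℝ) ≤ s ^ m / (((m+1).factorial : ℕ) : ℝ) := by positivity
      calc |(m:ℝ) - s| * s ^ m / (((m+1).factorial : ℕ) : ℝ) * (2*t)
          = (2*t*|(m:ℝ) - s|) * (s ^ m / (((m+1).factorial : ℕ) : ℝ)) := by ring
        _ ≤ (((m:ℝ) - s)^2 + s) * (s ^ m / (((m+1).factorial : ℕ) : ℝ)) :=
            mul_le_mul_of_nonneg_right habs hnn
        _ = (((m:ℝ) - s)^2 + s) * s ^ m / (((m+1).factorial : ℕ) : ℝ) := by ring
    have hmain := Summable.tsum_le_tsum hpt (sumG hs0.le) (hH.div_const (2*t))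
    rw [tsum_div_const] at hmain
    have hGle : (∑' m : ℕ, |(m:ℝ) - s| * s ^ m / (((m+1).factorial : ℕ) : ℝ))
        ≤ 3 * Real.exp s / (2*t) :=
      hmain.trans ((div_le_div_iff_of_pos_right (by positivity)).mpr hHle)
    calc Real.exp (-s) * (∑' m : ℕ, |(m:ℝ) - s| * s ^ m / (((m+1).factorial : ℕ) : ℝ))
        ≤ Real.exp (-s) * (3 * Real.exp s / (2*t)) :=
          mul_le_mul_of_nonneg_left hGle (Real.exp_pos _).le
      _ = 3 / (2*t) := by
          rw [Real.exp_neg]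
          field_simp [Real.exp_ne_zero]
      _ ≤ 2 / t := by
          rw [div_le_div_iff₀ (by positivity) ht]
          linarith
end

section
/- Let γ > 0. For every x > 0 and t > 0 one has: (i) T_t^{γ}(y ↦ y − x)(x) = 0; (ii) T_t^{γ}(y ↦ (y − x)²)(x) = 2γtx; and consequently (iii) T_t^{γ}(y ↦ |y − x|)(x) ≤ √(2γtx). -/
open MeasureTheory

section Aux

lemma aux_integrableOn (m : ℕ) :
    IntegrableOn (fun z : ℝ => Real.exp (-z) * z ^ m) (Set.Ioi 0) := by
  have h := Real.GammaIntegral_convergent (s := (m : ℝ) + 1) (by positivity)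
  refine h.congr_fun ?_ measurableSet_Ioi
  intro z hz
  simp only [add_sub_cancel_right, Real.rpow_natCast]

lemma aux_integral (m : ℕ) :
    ∫ z in Set.Ioi (0:ℝ), Real.exp (-z) * z ^ m = (m.factorial : ℝ) := by
  have h := Real.Gamma_eq_integral (s := (m : ℝ) + 1) (by positivity)
  rw [Real.Gamma_nat_eq_factorial, add_sub_cancel_right] at h
  simp only [Real.rpow_natCast] at h
  exact h.symm

lemma exp_tsum (a : ℝ) : ∑' n : ℕ, a ^ n / n.factorial = Real.exp a := by
  rw [Real.exp_eq_exp_ℝ, NormedSpace.exp_eq_tsum_div]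

lemma exp_tsum_shift (a : ℝ) :
    ∑' m : ℕ, a ^ (m + 1) / (m + 1).factorial = Real.exp a - 1 := by
  have h := Summable.tsum_eq_zero_add (Real.summable_pow_div_factorial a)
  rw [exp_tsum] at h
  simp only [pow_zero, Nat.factorial_zero, Nat.cast_one, div_one] at h
  linarith

lemma summable_shift (a : ℝ) :
    Summable (fun m : ℕ => a ^ (m + 1) / ((m + 1).factorial : ℝ)) :=
  (summable_nat_add_iff 1).2 (Real.summable_pow_div_factorial a)

lemma summable_mul_pow (a : ℝ) :
    Summable (fun m : ℕ => (m : ℝ) * a ^ m / m.factorial) := by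
  refine (summable_nat_add_iff 1).1 ?_
  refine ((Real.summable_pow_div_factorial a).mul_left a).congr fun m => ?_
  rw [Nat.factorial_succ]
  have h2 : (m.factorial : ℝ) ≠ 0 := by positivity
  push_cast
  field_simp
  ring

lemma tsum_mul_pow (a : ℝ) :
    ∑' m : ℕ, (m : ℝ) * a ^ m / m.factorial = a * Real.exp a := by
  have h := Summable.tsum_eq_zero_add (summable_mul_pow a)
  simp only [Nat.cast_zero, zero_mul, zero_div, zero_add] at h
  rw [h]
  have heq : ∀ m : ℕ, ((m + 1 : ℕ) : ℝ) * a ^ (m + 1) / ((m + 1).factorial : ℝ)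
      = a * (a ^ m / m.factorial) := by
    intro m
    rw [Nat.factorial_succ]
    have h2 : (m.factorial : ℝ) ≠ 0 := by positivity
    push_cast
    field_simp
    ring
  rw [tsum_congr heq, tsum_mul_left, exp_tsum]

lemma affine_integrableOn (γ t α β δ : ℝ) (m : ℕ) :
    IntegrableOn (fun z : ℝ =>
      Real.exp (-z) * z ^ m * (α + β * (γ * z * t) + δ * (γ * z * t) ^ 2)) (Set.Ioi 0) := by
  have h : (fun z : ℝ =>
      Real.exp (-z) * z ^ m * (α + β * (γ * z * t) + δ * (γ * z * t) ^ 2))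
      = fun z : ℝ => α * (Real.exp (-z) * z ^ m) + (β * (γ * t)) * (Real.exp (-z) * z ^ (m+1))
        + (δ * (γ * t) ^ 2) * (Real.exp (-z) * z ^ (m+2)) := by
    funext z; ring
  rw [h]
  exact (((aux_integrableOn m).const_mul α).add
    ((aux_integrableOn (m+1)).const_mul _)).add ((aux_integrableOn (m+2)).const_mul _)

lemma affine_integral (γ t α β δ : ℝ) (m : ℕ) :
    ∫ z in Set.Ioi (0:ℝ),
      Real.exp (-z) * z ^ m * (α + β * (γ * z * t) + δ * (γ * z * t) ^ 2)
    = α * m.factorial + (β * (γ * t)) * (m+1).factorial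
      + (δ * (γ * t) ^ 2) * (m+2).factorial := by
  have h : (fun z : ℝ =>
      Real.exp (-z) * z ^ m * (α + β * (γ * z * t) + δ * (γ * z * t) ^ 2))
      = fun z : ℝ => (α * (Real.exp (-z) * z ^ m) + (β * (γ * t)) * (Real.exp (-z) * z ^ (m+1)))
        + (δ * (γ * t) ^ 2) * (Real.exp (-z) * z ^ (m+2)) := by
    funext z; ring
  have i1 : IntegrableOn (fun z : ℝ => α * (Real.exp (-z) * z ^ m)) (Set.Ioi 0) :=
    (aux_integrableOn m).const_mul α
  have i2 : IntegrableOn (fun z : ℝ => (β * (γ * t)) * (Real.exp (-z) * z ^ (m+1))) (Set.Ioi 0) :=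
    (aux_integrableOn (m+1)).const_mul _
  have i3 : IntegrableOn (fun z : ℝ => (δ * (γ * t) ^ 2) * (Real.exp (-z) * z ^ (m+2))) (Set.Ioi 0) :=
    (aux_integrableOn (m+2)).const_mul _
  have i12 : IntegrableOn (fun z : ℝ => α * (Real.exp (-z) * z ^ m)
      + (β * (γ * t)) * (Real.exp (-z) * z ^ (m+1))) (Set.Ioi 0) := i1.add i2
  rw [h, integral_add i12 i3, integral_add i1 i2,
    MeasureTheory.integral_const_mul, MeasureTheory.integral_const_mul,
    MeasureTheory.integral_const_mul, aux_integral, aux_integral, aux_integral]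

end Aux

/-- The operator `T_t^γ = P_t^{γ,0}` (case `b = 0`):
`T_t^γ g(x) = e^{−x/(γt)} g(0) + e^{−x/(γt)} ∑_{m=0}^∞ (x/(γt))^{m+1} (1/(m!(m+1)!))
  ∫_0^∞ e^{−z} z^m g(γzt) dz`. -/
noncomputable def Tsem (γ t : ℝ) (g : ℝ → ℝ) (x : ℝ) : ℝ :=
  Real.exp (-x / (γ * t)) * g 0 +
    Real.exp (-x / (γ * t)) *
      ∑' m : ℕ, (x / (γ * t)) ^ (m + 1) * (1 / ((m.factorial : ℝ) * ((m + 1).factorial : ℝ))) *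
        ∫ z in Set.Ioi (0:ℝ), Real.exp (-z) * z ^ m * g (γ * z * t)

section Main

lemma term_eq (γ t x : ℝ) (α β δ : ℝ) :
    (fun m : ℕ => (x / (γ * t)) ^ (m + 1) *
        (1 / ((m.factorial : ℝ) * ((m + 1).factorial : ℝ))) *
        ∫ z in Set.Ioi (0:ℝ), Real.exp (-z) * z ^ m *
          (α + β * (γ * z * t) + δ * (γ * z * t) ^ 2))
    = fun m : ℕ =>
        α * ((x / (γ * t)) ^ (m + 1) / ((m + 1).factorial : ℝ))
        + (β * (γ * t) * (x / (γ * t)) + 2 * δ * (γ * t) ^ 2 * (x / (γ * t)))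
            * ((x / (γ * t)) ^ m / (m.factorial : ℝ))
        + (δ * (γ * t) ^ 2 * (x / (γ * t)))
            * ((m : ℝ) * (x / (γ * t)) ^ m / (m.factorial : ℝ)) := by
  funext m
  rw [affine_integral]
  set a := x / (γ * t)
  have hm1 : ((m + 1).factorial : ℝ) = ((m : ℝ) + 1) * (m.factorial : ℝ) := by
    rw [Nat.factorial_succ]; push_cast; ring
  have hm2 : ((m + 2).factorial : ℝ) = ((m : ℝ) + 2) * ((m : ℝ) + 1) * (m.factorial : ℝ) := by
    rw [show m + 2 = (m + 1) + 1 from rfl, Nat.factorial_succ, Nat.factorial_succ]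
    push_cast; ring
  have h0 : (m.factorial : ℝ) ≠ 0 := by positivity
  have h1 : ((m : ℝ) + 1) ≠ 0 := by positivity
  rw [hm1, hm2, pow_succ]
  field_simp
  ring

lemma term_summable (γ t x : ℝ) (α β δ : ℝ) :
    Summable (fun m : ℕ => (x / (γ * t)) ^ (m + 1) *
        (1 / ((m.factorial : ℝ) * ((m + 1).factorial : ℝ))) *
        ∫ z in Set.Ioi (0:ℝ), Real.exp (-z) * z ^ m *
          (α + β * (γ * z * t) + δ * (γ * z * t) ^ 2)) := by
  rw [term_eq γ t x α β δ]
  exact (((summable_shift _).mul_left α).add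
    ((Real.summable_pow_div_factorial _).mul_left _)).add ((summable_mul_pow _).mul_left _)

lemma Tsem_affine (γ t x : ℝ) (hγ : 0 < γ) (ht : 0 < t) (α β δ : ℝ) :
    Tsem γ t (fun y => α + β * y + δ * y ^ 2) x
      = α + β * x + δ * (x ^ 2 + 2 * (γ * t) * x) := by
  have hc : (0:ℝ) < γ * t := mul_pos hγ ht
  set a := x / (γ * t) with ha
  have hca : (γ * t) * a = x := by rw [ha]; field_simp [hc.ne']
  have s1 : Summable (fun m : ℕ => α * (a ^ (m + 1) / ((m + 1).factorial : ℝ))) :=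
    (summable_shift a).mul_left α
  have s2 : Summable (fun m : ℕ =>
      (β * (γ * t) * a + 2 * δ * (γ * t) ^ 2 * a) * (a ^ m / (m.factorial : ℝ))) :=
    (Real.summable_pow_div_factorial a).mul_left _
  have s3 : Summable (fun m : ℕ =>
      (δ * (γ * t) ^ 2 * a) * ((m : ℝ) * a ^ m / (m.factorial : ℝ))) :=
    (summable_mul_pow a).mul_left _
  have hT : Tsem γ t (fun y => α + β * y + δ * y ^ 2) x
      = Real.exp (-a) * (α + β * 0 + δ * 0 ^ 2) +
        Real.exp (-a) * ∑' m : ℕ,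
          (α * (a ^ (m + 1) / ((m + 1).factorial : ℝ))
          + (β * (γ * t) * a + 2 * δ * (γ * t) ^ 2 * a) * (a ^ m / (m.factorial : ℝ))
          + (δ * (γ * t) ^ 2 * a) * ((m : ℝ) * a ^ m / (m.factorial : ℝ))) := by
    rw [Tsem, neg_div]
    congr 1
    congr 1
    exact congrArg tsum (term_eq γ t x α β δ)
  rw [hT, Summable.tsum_add (s1.add s2) s3, Summable.tsum_add s1 s2, tsum_mul_left, tsum_mul_left,
    tsum_mul_left, exp_tsum_shift, exp_tsum, tsum_mul_pow]
  rw [Real.exp_neg, ← hca]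
  have he := Real.exp_ne_zero a
  field_simp
  ring

end Main

/-- For `γ > 0`, `x > 0`, `t > 0`: (i) `T_t^γ(y ↦ y − x)(x) = 0`;
(ii) `T_t^γ(y ↦ (y − x)²)(x) = 2γtx`; (iii) `T_t^γ(y ↦ |y − x|)(x) ≤ √(2γtx)`. -/
theorem stmt9 (γ : ℝ) (hγ : 0 < γ) (x t : ℝ) (hx : 0 < x) (ht : 0 < t) :
    Tsem γ t (fun y => y - x) x = 0 ∧
    Tsem γ t (fun y => (y - x) ^ 2) x = 2 * γ * t * x ∧
    Tsem γ t (fun y => |y - x|) x ≤ Real.sqrt (2 * γ * t * x) := by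
  have hc : (0:ℝ) < γ * t := mul_pos hγ ht
  refine ⟨?_, ?_, ?_⟩
  · have h : (fun y : ℝ => y - x) = fun y : ℝ => (-x) + 1 * y + 0 * y ^ 2 := by
      funext y; ring
    rw [h, Tsem_affine γ t x hγ ht]
    ring
  · have h : (fun y : ℝ => (y - x) ^ 2) = fun y : ℝ => x ^ 2 + (-(2*x)) * y + 1 * y ^ 2 := by
      funext y; ring
    rw [h, Tsem_affine γ t x hγ ht]
    ring
  · set L := Real.sqrt (2 * γ * t * x) with hLdef
    have hL2 : L ^ 2 = 2 * γ * t * x := Real.sq_sqrt (by positivity)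
    have hL0 : 0 < L := Real.sqrt_pos.2 (by positivity)
    set α := L / 2 + x ^ 2 / (2 * L) with hα
    set β := -(x / L) with hβ
    set δ := 1 / (2 * L) with hδ
    clear_value L α β δ
    have hcomp : ∀ y : ℝ, |y - x| ≤ α + β * y + δ * y ^ 2 := by
      intro y
      have h1 : α + β * y + δ * y ^ 2 = ((y - x) ^ 2 + L ^ 2) / (2 * L) := by
        rw [hα, hβ, hδ]; field_simp; ring
      have h2 : (|y - x| - L) ^ 2 / (2 * L) = ((y - x) ^ 2 + L ^ 2) / (2 * L) - |y - x| := by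
        rw [sub_sq, sq_abs]; field_simp; ring
      have h3 : 0 ≤ (|y - x| - L) ^ 2 / (2 * L) := by positivity
      linarith
    have h2x : 2 * (γ * t) * x = L ^ 2 := by rw [hL2]; ring
    have hval : Tsem γ t (fun y => α + β * y + δ * y ^ 2) x = L := by
      rw [Tsem_affine γ t x hγ ht, h2x, hα, hβ, hδ]
      field_simp
      ring
    have ha0 : (0:ℝ) ≤ x / (γ * t) := le_of_lt (div_pos hx hc)
    calc Tsem γ t (fun y => |y - x|) x
        ≤ Tsem γ t (fun y => α + β * y + δ * y ^ 2) x := by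
          rw [Tsem, Tsem]
          apply add_le_add
          · exact mul_le_mul_of_nonneg_left (by simpa using hcomp 0) (Real.exp_pos _).le
          · refine mul_le_mul_of_nonneg_left ?_ (Real.exp_pos _).le
            have hcoef : ∀ m : ℕ, (0:ℝ) ≤ (x / (γ * t)) ^ (m + 1) *
                (1 / ((m.factorial : ℝ) * ((m + 1).factorial : ℝ))) := by
              intro m
              have h1 : (0:ℝ) ≤ (x / (γ * t)) ^ (m + 1) := pow_nonneg ha0 _
              have h2 : (0:ℝ) ≤ 1 / ((m.factorial : ℝ) * ((m + 1).factorial : ℝ)) := by positivity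
              exact mul_nonneg h1 h2
            have hint : ∀ m : ℕ,
                (∫ z in Set.Ioi (0:ℝ), Real.exp (-z) * z ^ m * |γ * z * t - x|)
                ≤ ∫ z in Set.Ioi (0:ℝ), Real.exp (-z) * z ^ m *
                    (α + β * (γ * z * t) + δ * (γ * z * t) ^ 2) := by
              intro m
              refine integral_mono_of_nonneg ?_ (affine_integrableOn γ t α β δ m) ?_
              · filter_upwards [ae_restrict_mem measurableSet_Ioi] with z hz
                have hz0 : (0:ℝ) ≤ z := le_of_lt hz
                positivity
              · filter_upwards [ae_restrict_mem measurableSet_Ioi] with z hz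
                have hz0 : (0:ℝ) ≤ z := le_of_lt hz
                have hnn : (0:ℝ) ≤ Real.exp (-z) * z ^ m := by positivity
                exact mul_le_mul_of_nonneg_left (hcomp (γ * z * t)) hnn
            refine Summable.tsum_le_tsum (fun m => ?_) ?_ (term_summable γ t x α β δ)
            · exact mul_le_mul_of_nonneg_left (hint m) (hcoef m)
            · refine Summable.of_nonneg_of_le (fun m => ?_)
                (fun m => mul_le_mul_of_nonneg_left (hint m) (hcoef m))
                (term_summable γ t x α β δ)
              refine mul_nonneg (hcoef m) ?_
              refine setIntegral_nonneg measurableSet_Ioi fun z hz => ?_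
              have hz0 : (0:ℝ) ≤ z := le_of_lt hz
              positivity
      _ = L := hval
end
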